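/- For 0 < α < π, the quantities √3·sin α and cos α are both rational if and only if √3·tan(α/2) is rational. -/

import Mathlib

open Real

theorem stmt_14 (α : ℝ) (h0 : 0 < α) (h1 : α < π) :
    ((∃ q : ℚ, Real.sqrt 3 * sin α = q) ∧ (∃ q : ℚ, cos α = q)) ↔
      ∃ q : ℚ, Real.sqrt 3 * tan (α / 2) = q := by
  have hc : 0 < Real.cos (α / 2) :=
    Real.cos_pos_of_mem_Ioo ⟨by linarith [Real.pi_pos], by linarith⟩
  have hc0 : Real.cos (α / 2) ≠ 0 := ne_of_gt hc
  have hsin : Real.sin α = 2 * Real.sin (α/2) * Real.cos (α/2) := by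
    rw [← Real.sin_two_mul]; ring_nf
  have hcos : Real.cos α = 2 * Real.cos (α/2)^2 - 1 := by
    rw [← Real.cos_two_mul]; ring_nf
  have htan : Real.tan (α/2) = Real.sin (α/2) / Real.cos (α/2) := Real.tan_eq_sin_div_cos _
  have h3s : (Real.sqrt 3)^2 = 3 := Real.sq_sqrt (by norm_num)
  constructor
  · rintro ⟨⟨a, ha⟩, ⟨b, hb⟩⟩
    have hb1 : (1 : ℝ) + b = 2 * Real.cos (α/2)^2 := by rw [← hb, hcos]; ring
    have hb0' : ((1:ℝ) + b) ≠ 0 := by nlinarith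
    have hb0 : (1 : ℚ) + b ≠ 0 := by
      intro h
      apply hb0'
      exact_mod_cast congrArg (Rat.cast : ℚ → ℝ) h
    refine ⟨a / (1 + b), ?_⟩
    have key : Real.sqrt 3 * Real.tan (α/2) * ((1:ℝ) + b) = a := by
      rw [htan, hb1, ← ha, hsin]
      field_simp
    push_cast
    rw [eq_div_iff hb0']
    exact key
  · rintro ⟨q, hq⟩
    have hsq : Real.sqrt 3 * Real.sin (α/2) = q * Real.cos (α/2) := by
      rw [htan] at hq
      field_simp at hq
      linarith
    have hpy : Real.sin (α/2)^2 = 1 - Real.cos (α/2)^2 := by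
      have := Real.sin_sq_add_cos_sq (α/2); linarith
    have hc2 : Real.cos (α/2)^2 * ((q:ℝ)^2 + 3) = 3 := by
      have h1 : 3 * Real.sin (α/2)^2 = (q:ℝ)^2 * Real.cos (α/2)^2 := by
        have h2 : (Real.sqrt 3 * Real.sin (α/2))^2 = ((q:ℝ) * Real.cos (α/2))^2 := by rw [hsq]
        rw [mul_pow, mul_pow, h3s] at h2
        linarith
      nlinarith [hpy]
    have hq3 : ((q:ℝ)^2 + 3) ≠ 0 := by positivity
    have hc2' : Real.cos (α/2)^2 = 3/((q:ℝ)^2+3) := by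
      field_simp
      linarith [hc2]
    constructor
    · refine ⟨6*q/(q^2+3), ?_⟩
      have key : Real.sqrt 3 * Real.sin α = 2 * q * Real.cos (α/2)^2 := by
        rw [hsin]; nlinarith [hsq]
      push_cast
      rw [key, hc2']
      field_simp
      ring
    · refine ⟨(3 - q^2)/(q^2+3), ?_⟩
      push_cast
      rw [hcos, hc2']
      field_simp
      ring
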